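/- Fix an integer n ≥ 1, an integer k ≥ 1, a fixed family of couplings J_X ∈ ℝ for X ⊆ {1,…,n}, a fixed vector τ ∈ ℕⁿ, and h₁ ∈ [0,1]. Assume that for every h₀ ∈ (0,1) the Gibbs measure of the perturbed Hamiltonian satisfies ⟨σᵢσⱼ⟩ − ⟨σᵢ⟩⟨σⱼ⟩ ≥ 0 for all i, j ∈ {1,…,n}. Then for any interval [h̲, h̄] ⊂ (0,1), the integral over h₀ ∈ [h̲, h̄] of ⟨(Q_k − ⟨Q_k⟩)²⟩ (where the Gibbs average is taken at field strength h₀) is at most 2k/n. -/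

import Mathlib

open MeasureTheory ProbabilityTheory Finset

noncomputable section

/-- The real value of a Boolean spin: `true ↦ 1`, `false ↦ -1`. -/
def spinVal (b : Bool) : ℝ := if b then 1 else -1

/-- The product of spins over a subset `X ⊆ {1,…,n}`. -/
def spinProd {n : ℕ} (X : Finset (Fin n)) (σ : Fin n → Bool) : ℝ :=
  ∏ i ∈ X, spinVal (σ i)

/-- The perturbed Hamiltonian
`H(σ) = -∑_X J_X σ_X - h₀ ∑ᵢ σᵢ - h₁ ∑ᵢ τᵢ σᵢ`. -/
def Ham (n : ℕ) (J : Finset (Fin n) → ℝ) (h₀ h₁ : ℝ) (τ : Fin n → ℕ)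
    (σ : Fin n → Bool) : ℝ :=
  -(∑ X : Finset (Fin n), J X * spinProd X σ)
    - h₀ * ∑ i, spinVal (σ i) - h₁ * ∑ i, (τ i : ℝ) * spinVal (σ i)

/-- The partition function `Z = ∑_σ e^{-H(σ)}`. -/
def Zp (n : ℕ) (H : (Fin n → Bool) → ℝ) : ℝ :=
  ∑ σ : Fin n → Bool, Real.exp (-(H σ))

/-- The Gibbs average `⟨f⟩ = Z⁻¹ ∑_σ f(σ) e^{-H(σ)}`. -/
def gibbs (n : ℕ) (H : (Fin n → Bool) → ℝ) (f : (Fin n → Bool) → ℝ) : ℝ :=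
  (∑ σ : Fin n → Bool, f σ * Real.exp (-(H σ))) / Zp n H

/-- The replicated Gibbs average of a function of `k` i.i.d. replicas. -/
def gibbsRep (n k : ℕ) (H : (Fin n → Bool) → ℝ)
    (f : (Fin k → Fin n → Bool) → ℝ) : ℝ :=
  (∑ σs : Fin k → Fin n → Bool, f σs * ∏ a, Real.exp (-(H (σs a)))) / (Zp n H) ^ k

/-- The multi-overlap `Q_k = n⁻¹ ∑ᵢ σᵢ⁽¹⁾⋯σᵢ⁽ᵏ⁾` of `k` replicas. -/
def QkRep (n k : ℕ) (σs : Fin k → Fin n → Bool) : ℝ :=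
  (n : ℝ)⁻¹ * ∑ i, ∏ a, spinVal (σs a i)

/-- The local magnetization `⟨σᵢ⟩`. -/
def magg (n : ℕ) (H : (Fin n → Bool) → ℝ) (i : Fin n) : ℝ :=
  gibbs n H fun σ => spinVal (σ i)

/-- The two-point function `⟨σᵢσⱼ⟩`. -/
def corrr (n : ℕ) (H : (Fin n → Bool) → ℝ) (i j : Fin n) : ℝ :=
  gibbs n H fun σ => spinVal (σ i) * spinVal (σ j)

/-- `⟨Q_k⟩ = n⁻¹ ∑ᵢ ⟨σᵢ⟩ᵏ`, the Gibbs average of the multi-overlap. -/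
def avgQ (n k : ℕ) (H : (Fin n → Bool) → ℝ) : ℝ :=
  gibbsRep n k H (QkRep n k)

/-- The product of `n` i.i.d. Poisson(`r`) distributions on `ℕⁿ`. -/
def ppi (n : ℕ) (r : ℝ) : Measure (Fin n → ℕ) :=
  Measure.pi fun _ : Fin n => poissonMeasure (Real.toNNReal r)

end

noncomputable section AUX

lemma Zp_pos (n : ℕ) (H : (Fin n → Bool) → ℝ) : 0 < Zp n H :=
  Finset.sum_pos (fun σ _ => Real.exp_pos _) univ_nonempty

lemma spinVal_abs (b : Bool) : |spinVal b| = 1 := by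
  cases b <;> simp [spinVal]

lemma gibbs_abs_le (n : ℕ) (H : (Fin n → Bool) → ℝ) (f : (Fin n → Bool) → ℝ)
    (hf : ∀ σ, |f σ| ≤ 1) : |gibbs n H f| ≤ 1 := by
  have hZ := Zp_pos n H
  rw [gibbs, abs_div, abs_of_pos hZ, div_le_one hZ]
  calc |∑ σ : Fin n → Bool, f σ * Real.exp (-(H σ))|
      ≤ ∑ σ : Fin n → Bool, |f σ * Real.exp (-(H σ))| := Finset.abs_sum_le_sum_abs _ _
    _ ≤ ∑ σ : Fin n → Bool, Real.exp (-(H σ)) := by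
        refine Finset.sum_le_sum fun σ _ => ?_
        rw [abs_mul, abs_of_pos (Real.exp_pos _)]
        exact mul_le_of_le_one_left (Real.exp_pos _).le (hf σ)
    _ = Zp n H := rfl

lemma magg_abs_le (n : ℕ) (H : (Fin n → Bool) → ℝ) (i : Fin n) : |magg n H i| ≤ 1 :=
  gibbs_abs_le n H _ fun σ => (spinVal_abs _).le

lemma corrr_abs_le (n : ℕ) (H : (Fin n → Bool) → ℝ) (i j : Fin n) : |corrr n H i j| ≤ 1 :=
  gibbs_abs_le n H _ fun σ => by rw [abs_mul, spinVal_abs, spinVal_abs, one_mul]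

/-- key power inequality -/
lemma pow_sub_pow_le_k {a b : ℝ} (k : ℕ) (hba : b ≤ a) (ha : |a| ≤ 1) (hb : |b| ≤ 1) :
    a ^ k - b ^ k ≤ k * (a - b) := by
  rw [← geom_sum₂_mul a b k]
  have h1 : (∑ i ∈ range k, a ^ i * b ^ (k - 1 - i)) ≤ k := by
    calc (∑ i ∈ range k, a ^ i * b ^ (k - 1 - i))
        ≤ ∑ i ∈ range k, |a ^ i * b ^ (k - 1 - i)| :=
          Finset.sum_le_sum fun i _ => le_abs_self _
      _ ≤ ∑ i ∈ range k, 1 := by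
          refine Finset.sum_le_sum fun i _ => ?_
          rw [abs_mul, abs_pow, abs_pow]
          exact mul_le_one₀ (pow_le_one₀ (abs_nonneg _) ha) (pow_nonneg (abs_nonneg _) _)
            (pow_le_one₀ (abs_nonneg _) hb)
      _ = k := by simp
  have h2 : 0 ≤ a - b := sub_nonneg.2 hba
  exact mul_le_mul_of_nonneg_right h1 h2

/-- sum over function space of product factorizes -/
lemma sum_fun_prod {k : ℕ} {X : Type*} [Fintype X] (g : Fin k → X → ℝ) :
    (∑ σs : Fin k → X, ∏ a, g a (σs a)) = ∏ a, ∑ σ, g a σ := by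
  rw [Finset.prod_univ_sum]
  rw [← Fintype.piFinset_univ]

end AUX

noncomputable section AUX2
variable {n k : ℕ} (H : (Fin n → Bool) → ℝ)

lemma sum_prod_exp : (∑ σs : Fin k → Fin n → Bool, ∏ a, Real.exp (-(H (σs a))))
    = (Zp n H) ^ k := by
  rw [sum_fun_prod (fun _ σ => Real.exp (-(H σ)))]
  simp [Zp, Finset.prod_const, Finset.card_univ]

lemma Zp_pow_ne (n k : ℕ) (H : (Fin n → Bool) → ℝ) : (Zp n H) ^ k ≠ 0 :=
  pow_ne_zero _ (Zp_pos n H).ne'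

lemma gibbsRep_prod (f : (Fin n → Bool) → ℝ) :
    gibbsRep n k H (fun σs => ∏ a, f (σs a)) = (gibbs n H f) ^ k := by
  rw [gibbsRep, gibbs, div_pow]
  congr 1
  have h1 : ∀ σs : Fin k → Fin n → Bool,
      (∏ a, f (σs a)) * ∏ a, Real.exp (-(H (σs a)))
        = ∏ a, (f (σs a) * Real.exp (-(H (σs a)))) :=
    fun σs => (Finset.prod_mul_distrib).symm
  simp only [h1]
  rw [sum_fun_prod (fun (_ : Fin k) σ => f σ * Real.exp (-(H σ)))]
  simp

lemma gibbsRep_const (c : ℝ) : gibbsRep n k H (fun _ => c) = c := by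
  rw [gibbsRep]
  rw [← Finset.mul_sum, sum_prod_exp, mul_div_assoc, div_self (Zp_pow_ne n k H), mul_one]

lemma gibbsRep_add (f g : (Fin k → Fin n → Bool) → ℝ) :
    gibbsRep n k H (fun σs => f σs + g σs) = gibbsRep n k H f + gibbsRep n k H g := by
  simp only [gibbsRep, add_mul, Finset.sum_add_distrib, add_div]

lemma gibbsRep_smul (c : ℝ) (f : (Fin k → Fin n → Bool) → ℝ) :
    gibbsRep n k H (fun σs => c * f σs) = c * gibbsRep n k H f := by
  simp only [gibbsRep, ← Finset.mul_sum, mul_div_assoc, mul_assoc]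

lemma gibbsRep_sum {ι : Type*} (s : Finset ι) (f : ι → (Fin k → Fin n → Bool) → ℝ) :
    gibbsRep n k H (fun σs => ∑ i ∈ s, f i σs) = ∑ i ∈ s, gibbsRep n k H (f i) := by
  simp only [gibbsRep, Finset.sum_mul, ← Finset.sum_div]
  rw [Finset.sum_comm]

lemma avgQ_eq : avgQ n k H = (n : ℝ)⁻¹ * ∑ i, (magg n H i) ^ k := by
  rw [avgQ]
  have hq : QkRep n k = fun σs => (n : ℝ)⁻¹ * ∑ i, ∏ a, spinVal (σs a i) := rfl
  rw [hq, gibbsRep_smul, gibbsRep_sum]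
  congr 1
  exact Finset.sum_congr rfl fun i _ => gibbsRep_prod H (fun σ => spinVal (σ i))

lemma gibbsRep_Qsq : gibbsRep n k H (fun σs => (QkRep n k σs) ^ 2)
    = (n : ℝ)⁻¹ * ((n : ℝ)⁻¹ * ∑ i, ∑ j, (corrr n H i j) ^ k) := by
  have hQ2 : ∀ σs : Fin k → Fin n → Bool, (QkRep n k σs) ^ 2
      = (n : ℝ)⁻¹ * ((n:ℝ)⁻¹ * ∑ i, ∑ j, ∏ a, (spinVal (σs a i) * spinVal (σs a j))) := by
    intro σs
    rw [QkRep, mul_pow, sq ((n:ℝ)⁻¹), mul_assoc, sq]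
    congr 1; congr 1
    rw [Finset.sum_mul_sum]
    refine Finset.sum_congr rfl fun i _ => Finset.sum_congr rfl fun j _ => ?_
    rw [← Finset.prod_mul_distrib]
  simp only [hQ2]
  rw [gibbsRep_smul, gibbsRep_smul, gibbsRep_sum]
  congr 2
  refine Finset.sum_congr rfl fun i _ => ?_
  rw [gibbsRep_sum]
  exact Finset.sum_congr rfl fun j _ =>
    gibbsRep_prod H (fun σ => spinVal (σ i) * spinVal (σ j))

lemma variance_formula :
    gibbsRep n k H (fun σs => (QkRep n k σs - avgQ n k H) ^ 2)
      = (n : ℝ)⁻¹ * ((n : ℝ)⁻¹ * ∑ i, ∑ j,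
          ((corrr n H i j) ^ k - (magg n H i) ^ k * (magg n H j) ^ k)) := by
  have hexp : ∀ σs : Fin k → Fin n → Bool,
      (QkRep n k σs - avgQ n k H) ^ 2
        = (QkRep n k σs) ^ 2 + ((-2 * avgQ n k H) * QkRep n k σs + (avgQ n k H)^2) := by
    intro σs; ring
  simp only [hexp]
  rw [gibbsRep_add, gibbsRep_add, gibbsRep_smul, gibbsRep_const]
  have : gibbsRep n k H (QkRep n k) = avgQ n k H := rfl
  rw [this, gibbsRep_Qsq]
  have hsq : (avgQ n k H) ^ 2 = (n : ℝ)⁻¹ * ((n : ℝ)⁻¹ *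
      ∑ i, ∑ j, (magg n H i) ^ k * (magg n H j) ^ k) := by
    rw [avgQ_eq, mul_pow, pow_two (∑ i, (magg n H i) ^ k), Finset.sum_mul_sum]
    ring
  have hmid : -2 * avgQ n k H * avgQ n k H + avgQ n k H ^ 2 = -(avgQ n k H ^ 2) := by ring
  rw [hmid, hsq]
  simp only [Finset.sum_sub_distrib, mul_sub]
  ring
end AUX2

noncomputable section DERIV
variable (n : ℕ) (J : Finset (Fin n) → ℝ) (h₁ : ℝ) (τ : Fin n → ℕ)

/-- total spin -/
def Sm (σ : Fin n → Bool) : ℝ := ∑ i, spinVal (σ i)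
/-- h₀-independent part of `-H` -/
def Bt (σ : Fin n → Bool) : ℝ :=
  (∑ X : Finset (Fin n), J X * spinProd X σ) + h₁ * ∑ i, (τ i : ℝ) * spinVal (σ i)

lemma negHam (h₀ : ℝ) (σ : Fin n → Bool) :
    -(Ham n J h₀ h₁ τ σ) = Bt n J h₁ τ σ + h₀ * Sm n σ := by
  simp only [Ham, Bt, Sm]; ring

lemma hasDerivAt_w (h₀ : ℝ) (σ : Fin n → Bool) :
    HasDerivAt (fun h => Real.exp (-(Ham n J h h₁ τ σ)))
      (Sm n σ * Real.exp (-(Ham n J h₀ h₁ τ σ))) h₀ := by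
  have h1 : (fun h => Real.exp (-(Ham n J h h₁ τ σ)))
      = fun h => Real.exp (Bt n J h₁ τ σ + h * Sm n σ) := by
    funext h; rw [negHam]
  rw [h1, negHam]
  have h2 : HasDerivAt (fun h : ℝ => Bt n J h₁ τ σ + h * Sm n σ) (Sm n σ) h₀ := by
    simpa using (hasDerivAt_mul_const (Sm n σ)).const_add (Bt n J h₁ τ σ)
  simpa [mul_comm] using h2.exp

lemma hasDerivAt_num (c : (Fin n → Bool) → ℝ) (h₀ : ℝ) :
    HasDerivAt (fun h => ∑ σ : Fin n → Bool, c σ * Real.exp (-(Ham n J h h₁ τ σ)))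
      (∑ σ : Fin n → Bool, c σ * (Sm n σ * Real.exp (-(Ham n J h₀ h₁ τ σ)))) h₀ :=
  HasDerivAt.fun_sum fun σ _ => (hasDerivAt_w n J h₁ τ h₀ σ).const_mul (c σ)

lemma hasDerivAt_Z (h₀ : ℝ) :
    HasDerivAt (fun h => Zp n (Ham n J h h₁ τ))
      (∑ σ : Fin n → Bool, Sm n σ * Real.exp (-(Ham n J h₀ h₁ τ σ))) h₀ := by
  have := hasDerivAt_num n J h₁ τ (fun _ => 1) h₀
  simpa [Zp] using this

lemma hasDerivAt_magg (i : Fin n) (h₀ : ℝ) :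
    HasDerivAt (fun h => magg n (Ham n J h h₁ τ) i)
      (∑ j, (corrr n (Ham n J h₀ h₁ τ) i j
        - magg n (Ham n J h₀ h₁ τ) i * magg n (Ham n J h₀ h₁ τ) j)) h₀ := by
  have hN := hasDerivAt_num n J h₁ τ (fun σ => spinVal (σ i)) h₀
  have hZ := hasDerivAt_Z n J h₁ τ h₀
  have hZne : Zp n (Ham n J h₀ h₁ τ) ≠ 0 := (Zp_pos _ _).ne'
  have hdiv := hN.div hZ hZne
  refine HasDerivAt.congr_deriv hdiv ?_
  symm
  set Hh := Ham n J h₀ h₁ τ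
  set Z := Zp n Hh with hZdef
  set N := ∑ σ : Fin n → Bool, spinVal (σ i) * Real.exp (-(Hh σ)) with hNdef
  set N' := ∑ σ : Fin n → Bool, spinVal (σ i) * (Sm n σ * Real.exp (-(Hh σ))) with hN'def
  set Z' := ∑ σ : Fin n → Bool, Sm n σ * Real.exp (-(Hh σ)) with hZ'def
  have e1 : ∑ j, corrr n Hh i j = N' / Z := by
    simp only [corrr, gibbs]
    rw [← Finset.sum_div]
    congr 1
    rw [hN'def, Finset.sum_comm]
    refine Finset.sum_congr rfl fun σ _ => ?_
    simp only [Sm, Finset.sum_mul, Finset.mul_sum]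
    exact Finset.sum_congr rfl fun j _ => (mul_assoc _ _ _)
  have e2 : ∑ j, magg n Hh j = Z' / Z := by
    simp only [magg, gibbs]
    rw [← Finset.sum_div]
    congr 1
    rw [hZ'def, Finset.sum_comm]
    exact Finset.sum_congr rfl fun σ _ => (Finset.sum_mul _ _ _).symm
  have e3 : magg n Hh i = N / Z := rfl
  rw [Finset.sum_sub_distrib, e1, ← Finset.mul_sum, e2, e3]
  field_simp

lemma cont_num (c : (Fin n → Bool) → ℝ) :
    Continuous fun h => ∑ σ : Fin n → Bool, c σ * Real.exp (-(Ham n J h h₁ τ σ)) := by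
  refine continuous_finset_sum _ fun σ _ => ?_
  have h1 : (fun h => c σ * Real.exp (-(Ham n J h h₁ τ σ)))
      = fun h => c σ * Real.exp (Bt n J h₁ τ σ + h * Sm n σ) := by
    funext h; rw [negHam]
  rw [h1]
  fun_prop

lemma cont_Z : Continuous fun h => Zp n (Ham n J h h₁ τ) := by
  have := cont_num n J h₁ τ (fun _ => 1)
  simpa [Zp] using this

lemma cont_gibbs (f : (Fin n → Bool) → ℝ) :
    Continuous fun h => gibbs n (Ham n J h h₁ τ) f :=
  (cont_num n J h₁ τ f).div (cont_Z n J h₁ τ) fun h => (Zp_pos _ _).ne'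

lemma cont_magg (i : Fin n) : Continuous fun h => magg n (Ham n J h h₁ τ) i :=
  cont_gibbs n J h₁ τ _

lemma cont_corrr (i j : Fin n) : Continuous fun h => corrr n (Ham n J h h₁ τ) i j :=
  cont_gibbs n J h₁ τ _

end DERIV


/-- Theorem 2.2, thermal concentration of the overlaps, fixed disorder:
if for every `h₀ ∈ (0,1)` the Gibbs measure of the perturbed Hamiltonian satisfies
`⟨σᵢσⱼ⟩ - ⟨σᵢ⟩⟨σⱼ⟩ ≥ 0` for all `i, j`, then for any `[h̲, h̄] ⊂ (0,1)`,
`∫_{h̲}^{h̄} ⟨(Q_k - ⟨Q_k⟩)²⟩ dh₀ ≤ 2k/n`. -/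
theorem thermal_concentration_overlaps
    (n k : ℕ) (hn : 1 ≤ n) (hk : 1 ≤ k)
    (J : Finset (Fin n) → ℝ) (τ : Fin n → ℕ)
    (h₁ : ℝ) (hh₁ : h₁ ∈ Set.Icc (0 : ℝ) 1)
    (hGKS2 : ∀ h₀ ∈ Set.Ioo (0 : ℝ) 1, ∀ i j : Fin n,
      magg n (Ham n J h₀ h₁ τ) i * magg n (Ham n J h₀ h₁ τ) j
        ≤ corrr n (Ham n J h₀ h₁ τ) i j)
    (hlow hhigh : ℝ) (h1 : 0 < hlow) (h2 : hlow ≤ hhigh) (h3 : hhigh < 1) :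
    ∫ h₀ in hlow..hhigh,
        gibbsRep n k (Ham n J h₀ h₁ τ)
          (fun σs => (QkRep n k σs - avgQ n k (Ham n J h₀ h₁ τ)) ^ 2)
      ≤ 2 * k / n := by
  have hnpos : (0 : ℝ) < n := by exact_mod_cast hn
  set V : ℝ → ℝ := fun h₀ => gibbsRep n k (Ham n J h₀ h₁ τ)
      (fun σs => (QkRep n k σs - avgQ n k (Ham n J h₀ h₁ τ)) ^ 2) with hVdef
  set D : ℝ → ℝ := fun h₀ => (n : ℝ)⁻¹ * ((n : ℝ)⁻¹ * ∑ i, (k : ℝ) *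
      ∑ j, (corrr n (Ham n J h₀ h₁ τ) i j
        - magg n (Ham n J h₀ h₁ τ) i * magg n (Ham n J h₀ h₁ τ) j)) with hDdef
  set F : ℝ → ℝ := fun h => (n : ℝ)⁻¹ * ((n : ℝ)⁻¹ * ∑ i, (k : ℝ) *
      magg n (Ham n J h h₁ τ) i) with hFdef
  -- continuity of D
  have contD : Continuous D := by
    refine continuous_const.mul (continuous_const.mul (continuous_finset_sum _ fun i _ =>
      continuous_const.mul (continuous_finset_sum _ fun j _ => ?_)))
    exact (cont_corrr n J h₁ τ i j).sub ((cont_magg n J h₁ τ i).mul (cont_magg n J h₁ τ j))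
  -- F' = D
  have hF : ∀ x ∈ Set.uIcc hlow hhigh, HasDerivAt F (D x) x := by
    intro x _
    exact (HasDerivAt.fun_sum fun i _ =>
      (hasDerivAt_magg n J h₁ τ i x).const_mul (k : ℝ)).const_mul _ |>.const_mul _
  -- pointwise bound
  have hpt : ∀ x ∈ Set.Icc hlow hhigh, V x ≤ D x := by
    intro x hx
    have hxI : x ∈ Set.Ioo (0 : ℝ) 1 := ⟨lt_of_lt_of_le h1 hx.1, lt_of_le_of_lt hx.2 h3⟩
    rw [hVdef]
    simp only
    rw [variance_formula]
    refine mul_le_mul_of_nonneg_left (mul_le_mul_of_nonneg_left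
      (Finset.sum_le_sum fun i _ => ?_) (by positivity)) (by positivity)
    rw [Finset.mul_sum]
    refine Finset.sum_le_sum fun j _ => ?_
    rw [← mul_pow]
    refine pow_sub_pow_le_k k (hGKS2 x hxI i j) (corrr_abs_le _ _ _ _) ?_
    rw [abs_mul]
    exact mul_le_one₀ (magg_abs_le _ _ _) (abs_nonneg _) (magg_abs_le _ _ _)
  -- integral of D
  have hDint : IntervalIntegrable D MeasureTheory.volume hlow hhigh :=
    contD.intervalIntegrable _ _
  have hDeq : ∫ x in hlow..hhigh, D x = F hhigh - F hlow :=
    intervalIntegral.integral_eq_sub_of_hasDerivAt hF hDint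
  -- final bound on F difference
  have hFb : F hhigh - F hlow ≤ 2 * k / n := by
    rw [hFdef]
    simp only
    have hsum : ∀ h : ℝ, |∑ i, magg n (Ham n J h h₁ τ) i| ≤ n := by
      intro h
      calc |∑ i, magg n (Ham n J h h₁ τ) i| ≤ ∑ i, |magg n (Ham n J h h₁ τ) i| :=
            Finset.abs_sum_le_sum_abs _ _
        _ ≤ ∑ _i : Fin n, (1 : ℝ) := Finset.sum_le_sum fun i _ => magg_abs_le _ _ _
        _ = n := by simp
    have e : ∀ h : ℝ, ∑ i, (k : ℝ) * magg n (Ham n J h h₁ τ) i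
        = (k : ℝ) * ∑ i, magg n (Ham n J h h₁ τ) i := fun h => (Finset.mul_sum _ _ _).symm
    rw [e, e]
    have hhi := (abs_le.1 (hsum hhigh)).2
    have hlo := (abs_le.1 (hsum hlow)).1
    have hkpos : (0 : ℝ) ≤ k := Nat.cast_nonneg k
    have : (n : ℝ)⁻¹ * ((n : ℝ)⁻¹ * ((k:ℝ) * ∑ i, magg n (Ham n J hhigh h₁ τ) i))
        - (n : ℝ)⁻¹ * ((n : ℝ)⁻¹ * ((k:ℝ) * ∑ i, magg n (Ham n J hlow h₁ τ) i))
        ≤ (n : ℝ)⁻¹ * ((n : ℝ)⁻¹ * ((k:ℝ) * (2 * n))) := by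
      rw [← mul_sub, ← mul_sub, ← mul_sub]
      refine mul_le_mul_of_nonneg_left (mul_le_mul_of_nonneg_left
        (mul_le_mul_of_nonneg_left ?_ hkpos) (by positivity)) (by positivity)
      linarith
    refine this.trans ?_
    have hne : (n : ℝ) ≠ 0 := hnpos.ne'
    rw [div_eq_mul_inv]
    field_simp
    ring_nf
    exact le_refl _
  -- assemble
  by_cases hVint : IntervalIntegrable V MeasureTheory.volume hlow hhigh
  · calc ∫ x in hlow..hhigh, V x ≤ ∫ x in hlow..hhigh, D x :=
        intervalIntegral.integral_mono_on h2 hVint hDint hpt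
      _ = F hhigh - F hlow := hDeq
      _ ≤ 2 * k / n := hFb
  · rw [intervalIntegral.integral_undef hVint]
    positivity
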